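/- Let Θ be a compact metric space, let g, h : Θ → ℝ be continuous, let (λ_n) be a sequence of nonnegative reals with λ_n → ∞, and for each n let θ_n ∈ Θ be a global minimizer of θ ↦ g(θ) + λ_n·h(θ) over Θ. Then every cluster point θ̄ of the sequence (θ_n) is a global minimizer of h over Θ, i.e., h(θ̄) ≤ h(θ) for all θ ∈ Θ. -/
import Mathlib

open Filter

/-- If `Θ` is a compact metric space, `g h : Θ → ℝ` are continuous, `λₙ ≥ 0` with
`λₙ → ∞`, and each `θₙ` globally minimizes `θ ↦ g θ + λₙ * h θ`, then every cluster
point of `(θₙ)` is a global minimizer of `h`. -/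
theorem clusterPt_of_minimizers_minimizes_h {Θ : Type*} [MetricSpace Θ] [CompactSpace Θ]
    (g h : Θ → ℝ) (hg : Continuous g) (hh : Continuous h)
    (lam : ℕ → ℝ) (hlam_nonneg : ∀ n, 0 ≤ lam n)
    (hlam : Tendsto lam atTop atTop)
    (θseq : ℕ → Θ)
    (hmin : ∀ n, ∀ θ : Θ, g (θseq n) + lam n * h (θseq n) ≤ g θ + lam n * h θ)
    (θbar : Θ) (hcluster : MapClusterPt θbar atTop θseq) :
    ∀ θ : Θ, h θbar ≤ h θ := by
  intro θ
  -- extract a subsequence converging to θbar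
  obtain ⟨ψ, hψ, hψtend⟩ := TopologicalSpace.FirstCountableTopology.tendsto_subseq hcluster
  -- g attains a minimum
  obtain ⟨θm, -, hθm⟩ := isCompact_univ.exists_isMinOn ⟨θ, trivial⟩ hg.continuousOn
  set M : ℝ := g θ - g θm with hM
  have hMθ : ∀ n, g θ - g (θseq n) ≤ M := fun n => by
    have h0 : g θm ≤ g (θseq n) := hθm (Set.mem_univ (θseq n)); simp only [hM]; linarith
  have hlamψ : Tendsto (lam ∘ ψ) atTop atTop := hlam.comp hψ.tendsto_atTop
  -- eventually λ ≥ 1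
  have hev : ∀ᶠ k in atTop, h (θseq (ψ k)) ≤ h θ + M / lam (ψ k) := by
    filter_upwards [hlamψ.eventually_ge_atTop 1] with k hk
    have hpos : (0 : ℝ) < lam (ψ k) := lt_of_lt_of_le one_pos hk
    have h1 := hmin (ψ k) θ
    have h2 : lam (ψ k) * h (θseq (ψ k)) - lam (ψ k) * h θ ≤ M := by
      have := hMθ (ψ k); linarith
    rw [← sub_le_iff_le_add', le_div_iff₀ hpos]
    nlinarith
  have htend1 : Tendsto (fun k => h (θseq (ψ k))) atTop (nhds (h θbar)) :=
    (hh.continuousAt.tendsto).comp hψtend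
  have htend2 : Tendsto (fun k => h θ + M / lam (ψ k)) atTop (nhds (h θ + 0)) :=
    tendsto_const_nhds.add (tendsto_const_nhds.div_atTop hlamψ)
  have := le_of_tendsto_of_tendsto htend1 htend2 hev
  simpa using this
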